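/- Under the GT-SAGA setup, for every k ≥ 0, almost surely E[‖g^k − ∇f(x^k)‖² | F^k] ≤ 2L²‖x^k − Jx^k‖² + 2nL²·t^k, where J := ((1/n)𝟙_n𝟙_nᵀ) ⊗ I_p. -/

import Mathlib

open MeasureTheory ProbabilityTheory Finset Filter
open scoped ENNReal RealInnerProductSpace

noncomputable section

/-- The second largest singular value of a doubly stochastic matrix `w`, realized as the
operator norm of `w - (1/n) 𝟙ₙ 𝟙ₙᵀ` acting on `EuclideanSpace ℝ (Fin n)`. -/
def secondSV {n : ℕ} (w : Matrix (Fin n) (Fin n) ℝ) : ℝ :=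
  ‖LinearMap.toContinuousLinearMap
      (Matrix.toEuclideanLin (w - Matrix.of fun _ _ => (n : ℝ)⁻¹))‖

/-- The average `(1/n) ∑ᵢ vᵢ` of the blocks of a stacked vector `v ∈ ℝ^{np}`. -/
def blockAvg {n p : ℕ} (v : Fin n → EuclideanSpace ℝ (Fin p)) : EuclideanSpace ℝ (Fin p) :=
  (n : ℝ)⁻¹ • ∑ i, v i

/-- `‖v - J v‖²` for a stacked vector `v ∈ ℝ^{np}`, where `J = ((1/n) 𝟙ₙ 𝟙ₙᵀ) ⊗ Iₚ`. -/
def consSq {n p : ℕ} (v : Fin n → EuclideanSpace ℝ (Fin p)) : ℝ :=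
  ∑ i, ‖v i - blockAvg v‖ ^ 2

/-- `(W - J) v`, blockwise, where `W = w ⊗ Iₚ` and `J = ((1/n) 𝟙ₙ 𝟙ₙᵀ) ⊗ Iₚ`. -/
def WJapp {n p : ℕ} (w : Matrix (Fin n) (Fin n) ℝ) (v : Fin n → EuclideanSpace ℝ (Fin p)) :
    Fin n → EuclideanSpace ℝ (Fin p) :=
  fun i => (∑ r, w i r • v r) - blockAvg v

/-- The local batch function `fᵢ := (1/m) ∑ⱼ f_{i,j}`. -/
def floc {n m p : ℕ} (f : Fin n → Fin m → EuclideanSpace ℝ (Fin p) → ℝ) (i : Fin n) :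
    EuclideanSpace ℝ (Fin p) → ℝ :=
  fun u => (m : ℝ)⁻¹ * ∑ j, f i j u

/-- The global function `F := (1/n) ∑ᵢ fᵢ`. -/
def fglob {n m p : ℕ} (f : Fin n → Fin m → EuclideanSpace ℝ (Fin p) → ℝ) :
    EuclideanSpace ℝ (Fin p) → ℝ :=
  fun u => (n : ℝ)⁻¹ * ∑ i, floc f i u

/-- `F* := inf_x F(x)`. -/
def Fstar {n m p : ℕ} (f : Fin n → Fin m → EuclideanSpace ℝ (Fin p) → ℝ) : ℝ :=
  ⨅ u, fglob f u

/-- `∇f̄(x) := (1/n) ∑ᵢ ∇fᵢ(xᵢ)`. -/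
def gradfbar {n m p : ℕ} (f : Fin n → Fin m → EuclideanSpace ℝ (Fin p) → ℝ)
    (v : Fin n → EuclideanSpace ℝ (Fin p)) : EuclideanSpace ℝ (Fin p) :=
  (n : ℝ)⁻¹ • ∑ i, gradient (floc f i) (v i)

/-- The auxiliary quantity `t := (1/n) ∑ᵢ (1/m) ∑ⱼ ‖x̄ - z_{i,j}‖²`. -/
def tAux {n m p : ℕ} (xbar : EuclideanSpace ℝ (Fin p))
    (z : Fin n → Fin m → EuclideanSpace ℝ (Fin p)) : ℝ :=
  (n : ℝ)⁻¹ * ∑ i, (m : ℝ)⁻¹ * ∑ j, ‖xbar - z i j‖ ^ 2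

/-- The filtration `F^k := σ(τᵢᵗ, sᵢᵗ : i ∈ V, t ≤ k-1)`, with `F⁰` trivial. -/
def gtFilt {Ω : Type*} {n m : ℕ} (τ s : Fin n → ℕ → Ω → Fin m) (k : ℕ) :
    MeasurableSpace Ω :=
  ⨆ (i : Fin n) (t : ℕ) (_ : t < k),
    MeasurableSpace.comap (τ i t) ⊤ ⊔ MeasurableSpace.comap (s i t) ⊤

section AuxLemmas

variable {Ω : Type} [MeasurableSpace Ω] {n m p : ℕ}

private lemma gtFilt_le {τ s : Fin n → ℕ → Ω → Fin m}
    (hτ : ∀ i k, Measurable (τ i k)) (hs : ∀ i k, Measurable (s i k)) (k : ℕ) :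
    gtFilt τ s k ≤ ‹MeasurableSpace Ω› :=
  iSup_le fun i => iSup_le fun t => iSup_le fun _ =>
    sup_le (hτ i t).comap_le (hs i t).comap_le

private lemma gtFilt_mono {τ s : Fin n → ℕ → Ω → Fin m} {a b : ℕ} (hab : a ≤ b) :
    gtFilt τ s a ≤ gtFilt τ s b :=
  iSup_le fun i => iSup_le fun t => iSup_le fun h =>
    le_iSup_of_le i (le_iSup_of_le t (le_iSup_of_le (lt_of_lt_of_le h hab) le_rfl))

private lemma measurable_gtFilt_tau {τ s : Fin n → ℕ → Ω → Fin m} (i : Fin n) {t k : ℕ}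
    (h : t < k) : Measurable[gtFilt τ s k] (τ i t) :=
  Measurable.of_comap_le
    (le_iSup_of_le i (le_iSup_of_le t (le_iSup_of_le h le_sup_left)))

private lemma measurable_gtFilt_s {τ s : Fin n → ℕ → Ω → Fin m} (i : Fin n) {t k : ℕ}
    (h : t < k) : Measurable[gtFilt τ s k] (s i t) :=
  Measurable.of_comap_le
    (le_iSup_of_le i (le_iSup_of_le t (le_iSup_of_le h le_sup_right)))

private lemma grad_floc (f : Fin n → Fin m → EuclideanSpace ℝ (Fin p) → ℝ)
    (hdiff : ∀ i j, Differentiable ℝ (f i j)) (i : Fin n) (u : EuclideanSpace ℝ (Fin p)) :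
    gradient (floc f i) u = (m : ℝ)⁻¹ • ∑ j, gradient (f i j) u := by
  have hds : DifferentiableAt ℝ (fun v => ∑ j, f i j v) u :=
    DifferentiableAt.fun_sum fun j _ => (hdiff i j).differentiableAt
  unfold floc gradient
  rw [fderiv_const_mul hds, fderiv_fun_sum fun j _ => (hdiff i j).differentiableAt]
  simp [_root_.map_smul, map_sum]

private lemma meas_rec {L : ℝ} (f : Fin n → Fin m → EuclideanSpace ℝ (Fin p) → ℝ)
    (hlip : ∀ i j, LipschitzWith L.toNNReal (gradient (f i j)))
    (τ s : Fin n → ℕ → Ω → Fin m)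
    (w : Matrix (Fin n) (Fin n) ℝ) (α : ℝ)
    (x y g : ℕ → Fin n → Ω → EuclideanSpace ℝ (Fin p))
    (z : ℕ → Fin n → Fin m → Ω → EuclideanSpace ℝ (Fin p))
    (x0 : EuclideanSpace ℝ (Fin p))
    (hx0 : ∀ i ω, x 0 i ω = x0)
    (hz0 : ∀ i j ω, z 0 i j ω = x0)
    (hy0 : ∀ i ω, y 0 i ω = 0)
    (hgdef : ∀ k i ω, g k i ω =
      gradient (f i (τ i k ω)) (x k i ω) - gradient (f i (τ i k ω)) (z k i (τ i k ω) ω)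
        + (m : ℝ)⁻¹ • ∑ j, gradient (f i j) (z k i j ω))
    (hydef : ∀ k i ω, y (k + 1) i ω =
      ∑ r, w i r • (y k r ω + g k r ω - (if k = 0 then 0 else g (k - 1) r ω)))
    (hxdef : ∀ k i ω, x (k + 1) i ω = ∑ r, w i r • (x k r ω - α • y (k + 1) r ω))
    (hzdef : ∀ k i j ω, z (k + 1) i j ω = if j = s i k ω then x k i ω else z k i j ω) :
    ∀ K, (∀ i, Measurable[gtFilt τ s K] (x K i)) ∧ (∀ i, Measurable[gtFilt τ s K] (y K i)) ∧
      (∀ i j, Measurable[gtFilt τ s K] (z K i j)) ∧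
      (∀ i, Measurable[gtFilt τ s (K + 1)] (g K i)) := by
  have hgstep : ∀ (N : ℕ), (∀ i, Measurable[gtFilt τ s N] (x N i)) →
      (∀ i j, Measurable[gtFilt τ s N] (z N i j)) →
      ∀ i, Measurable[gtFilt τ s (N + 1)] (g N i) := by
    intro N hx hz i
    have hτN : Measurable[gtFilt τ s (N + 1)] (τ i N) :=
      measurable_gtFilt_tau i (Nat.lt_succ_self N)
    have hxm : ∀ r, Measurable[gtFilt τ s (N + 1)] (x N r) :=
      fun r => (hx r).mono (gtFilt_mono (Nat.le_succ N)) le_rfl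
    have hzm : ∀ r j, Measurable[gtFilt τ s (N + 1)] (z N r j) :=
      fun r j => (hz r j).mono (gtFilt_mono (Nat.le_succ N)) le_rfl
    have hgeq : g N i = fun ω =>
        (∑ j, if τ i N ω = j then
          (gradient (f i j) (x N i ω) - gradient (f i j) (z N i j ω)) else 0)
        + (m : ℝ)⁻¹ • ∑ j, gradient (f i j) (z N i j ω) := by
      funext ω
      rw [hgdef N i ω]
      congr 1
      rw [Finset.sum_ite_eq]
      simp
    rw [hgeq]
    refine Measurable.add ?_ ?_
    · refine Finset.measurable_sum _ fun j _ => Measurable.ite ?_ ?_ measurable_const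
      · exact hτN (by trivial : MeasurableSet ({j} : Set (Fin m)))
      · exact ((hlip i j).continuous.measurable.comp (hxm i)).sub
          ((hlip i j).continuous.measurable.comp (hzm i j))
    · exact Measurable.fun_const_smul
        (Finset.measurable_sum _ fun j _ => (hlip i j).continuous.measurable.comp (hzm i j)) _
  intro K
  induction K using Nat.strong_induction_on with
  | _ K IH =>
    match K with
    | 0 =>
      have hx' : ∀ i, Measurable[gtFilt τ s 0] (x 0 i) := by
        intro i
        rw [show x 0 i = fun _ => x0 from funext (hx0 i)]
        exact measurable_const
      have hy' : ∀ i, Measurable[gtFilt τ s 0] (y 0 i) := by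
        intro i
        rw [show y 0 i = fun _ => 0 from funext (hy0 i)]
        exact measurable_const
      have hz' : ∀ i j, Measurable[gtFilt τ s 0] (z 0 i j) := by
        intro i j
        rw [show z 0 i j = fun _ => x0 from funext (hz0 i j)]
        exact measurable_const
      exact ⟨hx', hy', hz', hgstep 0 hx' hz'⟩
    | (N + 1) =>
      obtain ⟨hxN, hyN, hzN, hgN⟩ := IH N (Nat.lt_succ_self N)
      have hxm : ∀ r, Measurable[gtFilt τ s (N + 1)] (x N r) :=
        fun r => (hxN r).mono (gtFilt_mono (Nat.le_succ N)) le_rfl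
      have hym : ∀ r, Measurable[gtFilt τ s (N + 1)] (y N r) :=
        fun r => (hyN r).mono (gtFilt_mono (Nat.le_succ N)) le_rfl
      have hzm : ∀ r j, Measurable[gtFilt τ s (N + 1)] (z N r j) :=
        fun r j => (hzN r j).mono (gtFilt_mono (Nat.le_succ N)) le_rfl
      have hyS : ∀ i, Measurable[gtFilt τ s (N + 1)] (y (N + 1) i) := by
        intro i
        rw [show y (N + 1) i = fun ω => ∑ r, w i r •
            (y N r ω + g N r ω - (if N = 0 then 0 else g (N - 1) r ω)) from
          funext (hydef N i)]
        refine Finset.measurable_sum _ fun r _ => Measurable.fun_const_smul ?_ _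
        refine ((hym r).add (hgN r)).sub ?_
        by_cases hN : N = 0
        · simp only [hN, if_pos rfl]
          exact measurable_const
        · simp only [if_neg hN]
          obtain ⟨-, -, -, hg'⟩ := IH (N - 1) (by omega)
          have h1 := hg' r
          rw [show N - 1 + 1 = N from by omega] at h1
          exact h1.mono (gtFilt_mono (Nat.le_succ N)) le_rfl
      have hxS : ∀ i, Measurable[gtFilt τ s (N + 1)] (x (N + 1) i) := by
        intro i
        rw [show x (N + 1) i = fun ω => ∑ r, w i r • (x N r ω - α • y (N + 1) r ω) from
          funext (hxdef N i)]
        exact Finset.measurable_sum _ fun r _ =>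
          Measurable.fun_const_smul ((hxm r).sub ((hyS r).const_smul α)) _
      have hzS : ∀ i j, Measurable[gtFilt τ s (N + 1)] (z (N + 1) i j) := by
        intro i j
        rw [show z (N + 1) i j = fun ω => if j = s i N ω then x N i ω else z N i j ω from
          funext (hzdef N i j)]
        refine Measurable.ite ?_ (hxm i) (hzm i j)
        have : {ω | j = s i N ω} = s i N ⁻¹' {j} := by
          ext ω; exact eq_comm
        rw [this]
        exact measurable_gtFilt_s i (Nat.lt_succ_self N) (by trivial)
      exact ⟨hxS, hyS, hzS, hgstep (N + 1) hxS hzS⟩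

end AuxLemmas

/-- GT-SAGA: bound on the variance of the local SAGA gradient estimators. -/
theorem gtsaga_local_variance_bound
    {Ω : Type} [MeasurableSpace Ω] (P : Measure Ω) [IsProbabilityMeasure P]
    {n m p : ℕ} (hn : 1 ≤ n) (hm : 1 ≤ m)
    (L : ℝ) (hL : 0 < L)
    (f : Fin n → Fin m → EuclideanSpace ℝ (Fin p) → ℝ)
    (hdiff : ∀ i j, Differentiable ℝ (f i j))
    (hlip : ∀ i j, LipschitzWith L.toNNReal (gradient (f i j)))
    (hFbdd : BddBelow (Set.range (fglob f)))
    (w : Matrix (Fin n) (Fin n) ℝ)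
    (hrow : ∀ i, ∑ r, w i r = 1) (hcol : ∀ r, ∑ i, w i r = 1)
    (lam : ℝ) (hlam : lam = secondSV w) (hlam0 : 0 ≤ lam) (hlam1 : lam < 1)
    (τ s : Fin n → ℕ → Ω → Fin m)
    (hτmeas : ∀ i k, Measurable (τ i k)) (hsmeas : ∀ i k, Measurable (s i k))
    (hτunif : ∀ i k j, P {ω | τ i k ω = j} = (m : ℝ≥0∞)⁻¹)
    (hsunif : ∀ i k j, P {ω | s i k ω = j} = (m : ℝ≥0∞)⁻¹)
    (hindep : iIndepFun (m := fun _ : Fin n × ℕ × Bool => (inferInstance : MeasurableSpace (Fin m)))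
      (fun q ω => if q.2.2 then τ q.1 q.2.1 ω else s q.1 q.2.1 ω) P)
    (α : ℝ) (hα0 : 0 < α)
    (x y g : ℕ → Fin n → Ω → EuclideanSpace ℝ (Fin p))
    (z : ℕ → Fin n → Fin m → Ω → EuclideanSpace ℝ (Fin p))
    (x0 : EuclideanSpace ℝ (Fin p))
    (hx0 : ∀ i ω, x 0 i ω = x0)
    (hz0 : ∀ i j ω, z 0 i j ω = x0)
    (hy0 : ∀ i ω, y 0 i ω = 0)
    (hgdef : ∀ k i ω, g k i ω =
      gradient (f i (τ i k ω)) (x k i ω) - gradient (f i (τ i k ω)) (z k i (τ i k ω) ω)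
        + (m : ℝ)⁻¹ • ∑ j, gradient (f i j) (z k i j ω))
    (hydef : ∀ k i ω, y (k + 1) i ω =
      ∑ r, w i r • (y k r ω + g k r ω - (if k = 0 then 0 else g (k - 1) r ω)))
    (hxdef : ∀ k i ω, x (k + 1) i ω = ∑ r, w i r • (x k r ω - α • y (k + 1) r ω))
    (hzdef : ∀ k i j ω, z (k + 1) i j ω = if j = s i k ω then x k i ω else z k i j ω)
    (hxL2 : ∀ k i, MemLp (x k i) 2 P)
    (hyL2 : ∀ k i, MemLp (y k i) 2 P)
    (hgL2 : ∀ k i, MemLp (g k i) 2 P)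
    (hzL2 : ∀ k i j, MemLp (z k i j) 2 P)
    (k : ℕ) :
    ∀ᵐ ω ∂P,
      (P[fun ω' => ∑ i, ‖g k i ω' - gradient (floc f i) (x k i ω')‖ ^ 2 | gtFilt τ s k]) ω
        ≤ 2 * L ^ 2 * consSq (fun i => x k i ω)
          + 2 * n * L ^ 2 * tAux (blockAvg (fun i => x k i ω)) (fun i j => z k i j ω) := by
  classical
  have hm0 : (m : ℝ) ≠ 0 := Nat.cast_ne_zero.2 (by omega)
  have hn0 : (n : ℝ) ≠ 0 := Nat.cast_ne_zero.2 (by omega)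
  have hF_le : gtFilt τ s k ≤ (inferInstance : MeasurableSpace Ω) := gtFilt_le hτmeas hsmeas k
  haveI : SigmaFinite (P.trim hF_le) := inferInstance
  obtain ⟨hxF, -, hzF, -⟩ :=
    meas_rec f hlip τ s w α x y g z x0 hx0 hz0 hy0 hgdef hydef hxdef hzdef k
  set D : Fin n → Fin m → Ω → EuclideanSpace ℝ (Fin p) :=
    fun i j ω => gradient (f i j) (x k i ω) - gradient (f i j) (z k i j ω) with hDdef
  set avg : Fin n → Ω → EuclideanSpace ℝ (Fin p) :=
    fun i ω => (m : ℝ)⁻¹ • ∑ j, D i j ω with havgdef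
  set ψ : Fin n → Fin m → Ω → ℝ := fun i j ω => ‖D i j ω - avg i ω‖ ^ 2 with hψdef
  set A : Fin n → Fin m → Set Ω := fun i j => {ω | τ i k ω = j} with hAdef
  -- measurability
  have hDF : ∀ i j, Measurable[gtFilt τ s k] (D i j) := fun i j =>
    ((hlip i j).continuous.measurable.comp (hxF i)).sub
      ((hlip i j).continuous.measurable.comp (hzF i j))
  have havgF : ∀ i, Measurable[gtFilt τ s k] (avg i) := fun i =>
    (Finset.measurable_sum _ fun j _ => hDF i j).fun_const_smul _
  have hψF : ∀ i j, Measurable[gtFilt τ s k] (ψ i j) := fun i j =>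
    (measurable_norm.pow_const 2).comp ((hDF i j).sub (havgF i))
  have hψm : ∀ i j, Measurable (ψ i j) := fun i j => (hψF i j).mono hF_le le_rfl
  have hA : ∀ i j, MeasurableSet (A i j) :=
    fun i j => hτmeas i k (by trivial : MeasurableSet ({j} : Set (Fin m)))
  -- integrability
  have hlipR : ∀ i j a b, ‖gradient (f i j) a - gradient (f i j) b‖ ≤ L * ‖a - b‖ := by
    intro i j a b
    have h := (hlip i j).dist_le_mul a b
    simpa [dist_eq_norm, Real.coe_toNNReal L hL.le] using h
  have hDL2 : ∀ i j, MemLp (D i j) 2 P := by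
    intro i j
    refine MemLp.of_le_mul (c := L) ((hxL2 k i).sub (hzL2 k i j))
      ((hDF i j).mono hF_le le_rfl).stronglyMeasurable.aestronglyMeasurable
      (Filter.Eventually.of_forall fun ω => ?_)
    simpa using hlipR i j (x k i ω) (z k i j ω)
  have havgL2 : ∀ i, MemLp (avg i) 2 P := by
    intro i
    have h := (memLp_finset_sum' Finset.univ fun j (_ : j ∈ Finset.univ) => hDL2 i j).const_smul
      ((m : ℝ)⁻¹)
    exact h.ae_eq (Filter.Eventually.of_forall fun ω => by
      simp [havgdef, hDdef, Finset.sum_apply, Finset.sum_sub_distrib])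
  have hψInt : ∀ i j, Integrable (ψ i j) P := fun i j =>
    (memLp_two_iff_integrable_sq_norm
      ((hDL2 i j).sub (havgL2 i)).aestronglyMeasurable).1 ((hDL2 i j).sub (havgL2 i))
  -- independence of τ i k from the filtration
  have hindp : ∀ i : Fin n,
      Indep (MeasurableSpace.comap (τ i k) inferInstance) (gtFilt τ s k) P := by
    intro i
    have hle_each : ∀ q : Fin n × ℕ × Bool,
        MeasurableSpace.comap (fun ω => if q.2.2 then τ q.1 q.2.1 ω else s q.1 q.2.1 ω)
          inferInstance ≤ (inferInstance : MeasurableSpace Ω) := by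
      intro q
      refine Measurable.comap_le ?_
      rcases q with ⟨i', t', b⟩
      cases b
      · simpa using hsmeas i' t'
      · simpa using hτmeas i' t'
    have hbig := indep_iSup_of_disjoint (μ := P) hle_each hindep.iIndep
      (S := {((i, k, true) : Fin n × ℕ × Bool)}) (T := {q : Fin n × ℕ × Bool | q.2.1 < k})
      (by simp [Set.disjoint_singleton_left])
    have hleft : (⨆ q ∈ ({((i, k, true) : Fin n × ℕ × Bool)} : Set (Fin n × ℕ × Bool)),
        MeasurableSpace.comap (fun ω => if q.2.2 then τ q.1 q.2.1 ω else s q.1 q.2.1 ω)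
          inferInstance) = MeasurableSpace.comap (τ i k) inferInstance := by
      rw [_root_.iSup_singleton]
      congr 1
    have hright : gtFilt τ s k ≤ ⨆ q ∈ {q : Fin n × ℕ × Bool | q.2.1 < k},
        MeasurableSpace.comap (fun ω => if q.2.2 then τ q.1 q.2.1 ω else s q.1 q.2.1 ω)
          inferInstance := by
      refine iSup_le fun i' => iSup_le fun t => iSup_le fun ht => sup_le ?_ ?_
      · refine le_trans (le_of_eq ?_)
          (le_iSup₂_of_le ((i', t, true) : Fin n × ℕ × Bool) ht le_rfl)
        congr 1
      · refine le_trans (le_of_eq ?_)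
          (le_iSup₂_of_le ((i', t, false) : Fin n × ℕ × Bool) ht le_rfl)
        congr 1
    rw [hleft] at hbig
    exact indep_of_indep_of_le_right hbig hright
  -- conditional expectation of the indicator
  have hcond_ind : ∀ i j,
      (P[(A i j).indicator (fun _ => (1 : ℝ)) | gtFilt τ s k]) =ᵐ[P] fun _ => (m : ℝ)⁻¹ := by
    intro i j
    have h1 : MeasurableSpace.comap (τ i k) inferInstance ≤ (inferInstance : MeasurableSpace Ω) :=
      (hτmeas i k).comap_le
    have hAcomap : MeasurableSet[MeasurableSpace.comap (τ i k) inferInstance] (A i j) :=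
      ⟨{j}, trivial, rfl⟩
    have hsm : StronglyMeasurable[MeasurableSpace.comap (τ i k) inferInstance]
        ((A i j).indicator (fun _ => (1 : ℝ))) :=
      stronglyMeasurable_const.indicator hAcomap
    have h2 := condExp_indep_eq h1 hF_le hsm (hindp i)
    refine h2.trans ?_
    have h3 : ∫ ω, (A i j).indicator (fun _ => (1 : ℝ)) ω ∂P = (m : ℝ)⁻¹ := by
      rw [show (fun ω => (A i j).indicator (fun _ => (1 : ℝ)) ω) = (A i j).indicator (fun _ => (1 : ℝ)) from rfl]
      rw [integral_indicator_const (1 : ℝ) (hA i j)]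
      have : P (A i j) = (m : ℝ≥0∞)⁻¹ := hτunif i k j
      rw [measureReal_def, this]
      simp [ENNReal.toReal_inv]
    rw [h3]
  -- pull-out property
  have hterm : ∀ i j, (P[(A i j).indicator (ψ i j) | gtFilt τ s k]) =ᵐ[P]
      fun ω => ψ i j ω * (m : ℝ)⁻¹ := by
    intro i j
    have heq : (A i j).indicator (ψ i j) = ψ i j * (A i j).indicator (fun _ => (1 : ℝ)) := by
      funext ω
      by_cases h : ω ∈ A i j <;> simp [Set.indicator_apply, h]
    rw [heq]
    have h1 := condExp_mul_of_stronglyMeasurable_left (μ := P) (hψF i j).stronglyMeasurable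
      (by rw [← heq]; exact (hψInt i j).indicator (hA i j))
      ((integrable_const (1 : ℝ)).indicator (hA i j))
    refine h1.trans ?_
    filter_upwards [hcond_ind i j] with ω hω
    simp only [Pi.mul_apply, hω]
  -- rewrite the target function
  have hXeq : (fun ω' => ∑ i, ‖g k i ω' - gradient (floc f i) (x k i ω')‖ ^ 2)
      = ∑ q : Fin n × Fin m, (A q.1 q.2).indicator (ψ q.1 q.2) := by
    funext ω
    rw [Finset.sum_apply, Fintype.sum_prod_type]
    refine Finset.sum_congr rfl fun i _ => ?_
    have h1 : g k i ω - gradient (floc f i) (x k i ω) = D i (τ i k ω) ω - avg i ω := by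
      rw [hgdef k i ω, grad_floc f hdiff i (x k i ω)]
      simp only [hDdef, havgdef]
      rw [Finset.sum_sub_distrib, smul_sub]
      abel
    have h2 : ∀ j, (A i j).indicator (ψ i j) ω = if τ i k ω = j then ψ i j ω else 0 := by
      intro j
      simp [hAdef, Set.indicator_apply]
    rw [h1]
    simp only [h2]
    rw [Finset.sum_ite_eq]
    simp [hψdef]
  have hce := condExp_finset_sum (μ := P) (m := gtFilt τ s k) (s := Finset.univ)
    (f := fun q : Fin n × Fin m => (A q.1 q.2).indicator (ψ q.1 q.2))
    (fun q _ => (hψInt q.1 q.2).indicator (hA q.1 q.2))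
  have hfinal : (P[fun ω' => ∑ i, ‖g k i ω' - gradient (floc f i) (x k i ω')‖ ^ 2 |
      gtFilt τ s k]) =ᵐ[P] fun ω => ∑ q : Fin n × Fin m, ψ q.1 q.2 ω * (m : ℝ)⁻¹ := by
    rw [hXeq]
    refine hce.trans ?_
    have hall : ∀ᵐ ω ∂P, ∀ q : Fin n × Fin m,
        (P[(A q.1 q.2).indicator (ψ q.1 q.2) | gtFilt τ s k]) ω = ψ q.1 q.2 ω * (m : ℝ)⁻¹ :=
      ae_all_iff.2 fun q => hterm q.1 q.2
    filter_upwards [hall] with ω hω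
    rw [Finset.sum_apply]
    exact Finset.sum_congr rfl fun q _ => hω q
  -- pointwise bound
  have hbound : ∀ ω, ∑ q : Fin n × Fin m, ψ q.1 q.2 ω * (m : ℝ)⁻¹
      ≤ 2 * L ^ 2 * consSq (fun i => x k i ω)
        + 2 * n * L ^ 2 * tAux (blockAvg (fun i => x k i ω)) (fun i j => z k i j ω) := by
    intro ω
    set xb := blockAvg (fun i => x k i ω) with hxb
    have hvar : ∀ i, ∑ j, ψ i j ω ≤ ∑ j, ‖D i j ω‖ ^ 2 := by
      intro i
      have hsum : ∑ j, D i j ω = (m : ℝ) • avg i ω := by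
        simp only [havgdef]
        rw [smul_smul, mul_inv_cancel₀ hm0, one_smul]
      have hcalc : ∑ j, ψ i j ω = (∑ j, ‖D i j ω‖ ^ 2) - (m : ℝ) * ‖avg i ω‖ ^ 2 := by
        calc ∑ j, ψ i j ω
            = ∑ j, (‖D i j ω‖ ^ 2 - 2 * ⟪D i j ω, avg i ω⟫ + ‖avg i ω‖ ^ 2) :=
              Finset.sum_congr rfl fun j _ => by
                simp only [hψdef]; exact norm_sub_sq_real _ _
          _ = (∑ j, ‖D i j ω‖ ^ 2) - 2 * ⟪∑ j, D i j ω, avg i ω⟫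
              + (m : ℝ) * ‖avg i ω‖ ^ 2 := by
              rw [Finset.sum_add_distrib, Finset.sum_sub_distrib, ← Finset.mul_sum, ← sum_inner,
                Finset.sum_const, Finset.card_univ, Fintype.card_fin, nsmul_eq_mul]
          _ = (∑ j, ‖D i j ω‖ ^ 2) - (m : ℝ) * ‖avg i ω‖ ^ 2 := by
              rw [hsum, real_inner_smul_left, real_inner_self_eq_norm_sq]
              ring
      rw [hcalc]
      have h0 : (0 : ℝ) ≤ (m : ℝ) * ‖avg i ω‖ ^ 2 := by positivity
      linarith
    have hDb : ∀ i j, ‖D i j ω‖ ^ 2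
        ≤ L ^ 2 * (2 * ‖x k i ω - xb‖ ^ 2 + 2 * ‖xb - z k i j ω‖ ^ 2) := by
      intro i j
      have h1 : ‖D i j ω‖ ≤ L * ‖x k i ω - z k i j ω‖ := hlipR i j _ _
      have h2 : ‖x k i ω - z k i j ω‖ ≤ ‖x k i ω - xb‖ + ‖xb - z k i j ω‖ := by
        have h := dist_triangle (x k i ω) xb (z k i j ω)
        simpa [dist_eq_norm] using h
      have h3 : ‖D i j ω‖ ^ 2 ≤ (L * ‖x k i ω - z k i j ω‖) ^ 2 :=
        pow_le_pow_left₀ (norm_nonneg _) h1 2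
      have h4 : ‖x k i ω - z k i j ω‖ ^ 2
          ≤ (‖x k i ω - xb‖ + ‖xb - z k i j ω‖) ^ 2 :=
        pow_le_pow_left₀ (norm_nonneg _) h2 2
      nlinarith [sq_nonneg (‖x k i ω - xb‖ - ‖xb - z k i j ω‖), sq_nonneg L,
        mul_le_mul_of_nonneg_left h4 (sq_nonneg L)]
    have hper : ∀ i, (m : ℝ)⁻¹ * ∑ j, L ^ 2 * (2 * ‖x k i ω - xb‖ ^ 2
        + 2 * ‖xb - z k i j ω‖ ^ 2)
        = 2 * L ^ 2 * ‖x k i ω - xb‖ ^ 2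
          + 2 * L ^ 2 * ((m : ℝ)⁻¹ * ∑ j, ‖xb - z k i j ω‖ ^ 2) := by
      intro i
      simp only [mul_add, Finset.sum_add_distrib, Finset.sum_const, Finset.card_univ,
        Fintype.card_fin, nsmul_eq_mul, ← Finset.mul_sum]
      field_simp
    have hrhs : 2 * (n : ℝ) * L ^ 2 * tAux xb (fun i j => z k i j ω)
        = ∑ i, 2 * L ^ 2 * ((m : ℝ)⁻¹ * ∑ j, ‖xb - z k i j ω‖ ^ 2) := by
      have haux : ∀ S : Fin n → ℝ,
          2 * (n : ℝ) * L ^ 2 * ((n : ℝ)⁻¹ * ∑ i, S i) = ∑ i, 2 * L ^ 2 * S i := by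
        intro S
        rw [← Finset.mul_sum]
        field_simp
      simpa [tAux] using haux (fun i => (m : ℝ)⁻¹ * ∑ j, ‖xb - z k i j ω‖ ^ 2)
    have hcons : consSq (fun i => x k i ω) = ∑ i, ‖x k i ω - xb‖ ^ 2 := by
      simp only [consSq, ← hxb]
    calc ∑ q : Fin n × Fin m, ψ q.1 q.2 ω * (m : ℝ)⁻¹
        = ∑ i, (m : ℝ)⁻¹ * ∑ j, ψ i j ω := by
          rw [Fintype.sum_prod_type]
          exact Finset.sum_congr rfl fun i _ => by
            rw [Finset.mul_sum]
            exact Finset.sum_congr rfl fun j _ => mul_comm _ _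
      _ ≤ ∑ i, (m : ℝ)⁻¹ * ∑ j, L ^ 2 * (2 * ‖x k i ω - xb‖ ^ 2
            + 2 * ‖xb - z k i j ω‖ ^ 2) := by
          refine Finset.sum_le_sum fun i _ => ?_
          refine mul_le_mul_of_nonneg_left ?_ (by positivity)
          exact le_trans (hvar i) (Finset.sum_le_sum fun j _ => hDb i j)
      _ = 2 * L ^ 2 * consSq (fun i => x k i ω)
          + 2 * n * L ^ 2 * tAux xb (fun i j => z k i j ω) := by
          rw [Finset.sum_congr rfl fun i _ => hper i, hrhs, hcons, Finset.mul_sum,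
            ← Finset.sum_add_distrib]
  filter_upwards [hfinal] with ω hω
  rw [hω]
  exact hbound ω

end
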